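/- Bott equivalent acyclic digraphs have the same odd height: if D and H are Bott equivalent acyclic digraphs, then D has a vertex of odd out-degree if and only if H does, and in that case the maximum k such that L_k(D) contains a vertex of odd out-degree equals the maximum k such that L_k(H) contains a vertex of odd out-degree. -/

import Mathlib

/-- Local complementation at `v`: arc set `A(D) Δ (N⁻_D(v) × N⁺_D(v))`. -/
def localComp {V : Type*} (R : V → V → Prop) (v : V) : V → V → Prop :=
  fun x y => Xor' (R x y) (R x v ∧ R v y)

/-- The slide on `uv`: arc set `A(D) Δ {(v,w) : w ∈ N⁺_D(u)}`. -/
def slideRel {V : Type*} (R : V → V → Prop) (u v : V) : V → V → Prop :=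
  fun x y => Xor' (R x y) (x = v ∧ R u y)

/-- A digraph is acyclic if it has no directed cycle. -/
def AcyclicRel {V : Type*} (R : V → V → Prop) : Prop :=
  ∀ v : V, ¬ Relation.TransGen R v v

/-- One graph operation: a local complementation or a legal slide. -/
inductive GStep {V : Type*} : (V → V → Prop) → (V → V → Prop) → Prop
  | lc (R : V → V → Prop) (v : V) : GStep R (localComp R v)
  | sl (R : V → V → Prop) (u v : V) (h : u ≠ v) (hN : ∀ w, R w u ↔ R w v) :
      GStep R (slideRel R u v)

/-- Bott equivalence of digraphs. -/
def BottEquivD {V : Type*} {W : Type*} (R : V → V → Prop) (S : W → W → Prop) : Prop :=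
  ∃ R' : V → V → Prop, Relation.ReflTransGen GStep R R' ∧
    ∃ e : V ≃ W, ∀ a b : V, R' a b ↔ S (e a) (e b)

/-- There is a directed path with exactly `k` arcs ending at `v`. -/
def EndPath {V : Type*} (R : V → V → Prop) (k : ℕ) (v : V) : Prop :=
  ∃ f : Fin (k + 1) → V, Function.Injective f ∧ f (Fin.last k) = v ∧
    ∀ i : Fin k, R (f i.castSucc) (f i.succ)

/-- The `k`-th level set `L_k(D)`. -/
def levelSet {V : Type*} (R : V → V → Prop) (k : ℕ) : Set V :=
  {v | EndPath R k v ∧ ∀ m : ℕ, k < m → ¬ EndPath R m v}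

/-- The out-degree of `v`. -/
noncomputable def outDeg {V : Type*} (R : V → V → Prop) (v : V) : ℕ :=
  Nat.card {w : V | R v w}

section WalkAux

variable {V : Type*}

def WalkEnd (R : V → V → Prop) (k : ℕ) (v : V) : Prop :=
  ∃ f : ℕ → V, f k = v ∧ ∀ i < k, R (f i) (f (i + 1))

theorem walkEnd_zero (R : V → V → Prop) (v : V) : WalkEnd R 0 v :=
  ⟨fun _ => v, rfl, fun i hi => absurd hi (Nat.not_lt_zero i)⟩

theorem walkEnd_succ_iff {R : V → V → Prop} {k : ℕ} {v : V} :
    WalkEnd R (k + 1) v ↔ ∃ u, R u v ∧ WalkEnd R k u := by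
  constructor
  · rintro ⟨f, hfk, hstep⟩
    exact ⟨f k, hfk ▸ hstep k (Nat.lt_succ_self k), f, rfl, fun i hi => hstep i (by omega)⟩
  · rintro ⟨u, huv, f, hfk, hstep⟩
    refine ⟨Function.update f (k + 1) v, Function.update_self _ _ _, fun i hi => ?_⟩
    rcases Nat.lt_or_ge i k with h | h
    · rw [Function.update_of_ne (by omega), Function.update_of_ne (by omega)]
      exact hstep i h
    · have hik : i = k := by omega
      subst hik
      rw [Function.update_of_ne (by omega), Function.update_self, hfk]
      exact huv

theorem walk_transGen {R : V → V → Prop} {f : ℕ → V} {k : ℕ}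
    (hf : ∀ i < k, R (f i) (f (i + 1))) :
    ∀ i j, i < j → j ≤ k → Relation.TransGen R (f i) (f j) := by
  intro i j hij hjk
  induction j with
  | zero => omega
  | succ n ih =>
    rcases Nat.lt_or_ge i n with h | h
    · exact (ih h (by omega)).tail (hf n (by omega))
    · have : i = n := by omega
      subst this
      exact Relation.TransGen.single (hf i (by omega))

theorem endPath_iff_walkEnd {R : V → V → Prop} (hR : AcyclicRel R) {k : ℕ} {v : V} :
    EndPath R k v ↔ WalkEnd R k v := by
  constructor
  · rintro ⟨f, hinj, hlast, hstep⟩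
    refine ⟨fun n => if h : n < k + 1 then f ⟨n, h⟩ else v, ?_, fun i hi => ?_⟩
    · beta_reduce
      rw [dif_pos (Nat.lt_succ_self k)]; exact hlast
    · beta_reduce
      rw [dif_pos (by omega : i < k + 1), dif_pos (by omega : i + 1 < k + 1)]
      exact hstep ⟨i, hi⟩
  · rintro ⟨f, hfk, hstep⟩
    refine ⟨fun i : Fin (k + 1) => f i.val, ?_, hfk, fun i => hstep i.val i.isLt⟩
    intro i j hij
    have hij' : f i.val = f j.val := hij
    by_contra hne
    have hvne : (i : ℕ) ≠ (j : ℕ) := fun h => hne (Fin.ext h)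
    rcases hvne.lt_or_gt with h | h
    · exact hR (f j.val) (hij' ▸ walk_transGen hstep i.val j.val h (by omega))
    · exact hR (f i.val) (hij'.symm ▸ walk_transGen hstep j.val i.val h (by omega))

theorem walkEnd_lt_card [Fintype V] {R : V → V → Prop} (hR : AcyclicRel R) {k : ℕ} {v : V}
    (h : WalkEnd R k v) : k < Fintype.card V := by
  obtain ⟨f, hinj, -, -⟩ := (endPath_iff_walkEnd hR).mpr h
  have := Fintype.card_le_of_injective f hinj
  simpa using this

end WalkAux

section LvlAux

variable {V : Type*}

noncomputable def lvl (R : V → V → Prop) (v : V) : ℕ := sSup {k | WalkEnd R k v}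

theorem le_lvl_of_bdd {R : V → V → Prop} {v : V} (hb : BddAbove {k | WalkEnd R k v})
    {k : ℕ} (h : WalkEnd R k v) : k ≤ lvl R v := le_csSup hb h

theorem lvl_mem_of_bdd {R : V → V → Prop} {v : V} (hb : BddAbove {k | WalkEnd R k v}) :
    WalkEnd R (lvl R v) v := Nat.sSup_mem ⟨0, walkEnd_zero R v⟩ hb

theorem bdd_of_acyclic [Fintype V] {R : V → V → Prop} (hR : AcyclicRel R) (v : V) :
    BddAbove {k | WalkEnd R k v} :=
  ⟨Fintype.card V, fun _ hk => (walkEnd_lt_card hR hk).le⟩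

theorem le_lvl [Fintype V] {R : V → V → Prop} (hR : AcyclicRel R) {k : ℕ} {v : V}
    (h : WalkEnd R k v) : k ≤ lvl R v := le_lvl_of_bdd (bdd_of_acyclic hR v) h

theorem lvl_mem [Fintype V] {R : V → V → Prop} (hR : AcyclicRel R) (v : V) :
    WalkEnd R (lvl R v) v := lvl_mem_of_bdd (bdd_of_acyclic hR v)

theorem lvl_lt_card [Fintype V] {R : V → V → Prop} (hR : AcyclicRel R) (v : V) :
    lvl R v < Fintype.card V := walkEnd_lt_card hR (lvl_mem hR v)

theorem lvl_lt [Fintype V] {R : V → V → Prop} (hR : AcyclicRel R) {u v : V} (h : R u v) :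
    lvl R u < lvl R v :=
  le_lvl hR (walkEnd_succ_iff.mpr ⟨u, h, lvl_mem hR u⟩)

theorem lvl_eq_succ [Fintype V] {R : V → V → Prop} (hR : AcyclicRel R) {v : V} {k : ℕ}
    (h : lvl R v = k + 1) : ∃ u, R u v ∧ lvl R u = k := by
  have hm : WalkEnd R (k + 1) v := h ▸ lvl_mem hR v
  obtain ⟨u, hu, hw⟩ := walkEnd_succ_iff.mp hm
  have := lvl_lt hR hu
  exact ⟨u, hu, le_antisymm (by omega) (le_lvl hR hw)⟩

theorem walkEnd_le_of_mono {R' : V → V → Prop} {g : V → ℕ}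
    (hg : ∀ z x, R' z x → g z < g x) :
    ∀ (k : ℕ) (x : V), WalkEnd R' k x → k ≤ g x := by
  intro k
  induction k with
  | zero => intro x _; exact Nat.zero_le _
  | succ n ih =>
    intro x h
    obtain ⟨u, hu, hw⟩ := walkEnd_succ_iff.mp h
    have h1 := ih u hw
    have h2 := hg u x hu
    omega

theorem acyclic_of_mono {R' : V → V → Prop} {g : V → ℕ}
    (hg : ∀ z x, R' z x → g z < g x) : AcyclicRel R' := by
  have key : ∀ a b, Relation.TransGen R' a b → g a < g b := by
    intro a b h
    induction h with
    | single h => exact hg _ _ h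
    | tail _ h ih => exact ih.trans (hg _ _ h)
  intro v hv
  exact lt_irrefl _ (key v v hv)

theorem lvl_preserved [Fintype V] {R R' : V → V → Prop} (hR : AcyclicRel R)
    (C1 : ∀ z x, R' z x → lvl R z < lvl R x)
    (C3 : ∀ z x, R z x → ∃ z', R' z' x ∧ lvl R z ≤ lvl R z' ∧ lvl R z' < lvl R x) :
    ∀ x, lvl R' x = lvl R x := by
  have bdd' : ∀ x, BddAbove {k | WalkEnd R' k x} :=
    fun x => ⟨lvl R x, fun k hk => walkEnd_le_of_mono C1 k x hk⟩
  have le1 : ∀ x, lvl R' x ≤ lvl R x :=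
    fun x => walkEnd_le_of_mono C1 _ x (lvl_mem_of_bdd (bdd' x))
  have ge1 : ∀ n x, lvl R x = n → n ≤ lvl R' x := by
    intro n
    induction n using Nat.strong_induction_on with
    | _ n ih =>
      intro x hx
      cases n with
      | zero => omega
      | succ k =>
        obtain ⟨z, hz, hlz⟩ := lvl_eq_succ hR hx
        obtain ⟨z', hz', h1, h2⟩ := C3 z x hz
        have hz'k : lvl R z' = k := by omega
        have hih := ih k (Nat.lt_succ_self k) z' hz'k
        have hle := le_lvl_of_bdd (bdd' x)
          (walkEnd_succ_iff.mpr ⟨z', hz', lvl_mem_of_bdd (bdd' z')⟩)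
        omega
  exact fun x => le_antisymm (le1 x) (ge1 _ x rfl)

theorem lvl_congr_in {R : V → V → Prop} {u v : V} (hN : ∀ w, R w u ↔ R w v) :
    lvl R u = lvl R v := by
  have key : ∀ k, WalkEnd R k u ↔ WalkEnd R k v := by
    intro k
    cases k with
    | zero => exact iff_of_true (walkEnd_zero R u) (walkEnd_zero R v)
    | succ n =>
      rw [walkEnd_succ_iff, walkEnd_succ_iff]
      exact exists_congr fun z => and_congr_left' (hN z)
  unfold lvl
  congr 1
  ext k
  exact key k

end LvlAux

section ParityAux

variable {V : Type*}

theorem card_xor_mod [Fintype V] (p q : V → Prop) :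
    Nat.card {w : V | Xor' (p w) (q w)} % 2
      = (Nat.card {w : V | p w} + Nat.card {w : V | q w}) % 2 := by
  classical
  set A := {w : V | p w} with hA
  set B := {w : V | q w} with hB
  have hx : {w : V | Xor' (p w) (q w)} = (A \ B) ∪ (B \ A) := by
    ext w
    simp only [hA, hB, Set.mem_union, Set.mem_diff, Set.mem_setOf_eq, Xor', xor_def]
  have hdisj : Disjoint (A \ B) (B \ A) := disjoint_sdiff_sdiff
  rw [Nat.card_coe_set_eq, Nat.card_coe_set_eq, Nat.card_coe_set_eq, hx,
    Set.ncard_union_eq hdisj (Set.toFinite _) (Set.toFinite _)]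
  have h1 := Set.ncard_inter_add_ncard_diff_eq_ncard A B (Set.toFinite _)
  have h2 := Set.ncard_inter_add_ncard_diff_eq_ncard B A (Set.toFinite _)
  have h3 : (A ∩ B).ncard = (B ∩ A).ncard := by rw [Set.inter_comm]
  omega

theorem outDeg_lc_not {R : V → V → Prop} {v x : V} (hxv : ¬ R x v) :
    outDeg (localComp R v) x = outDeg R x := by
  unfold outDeg
  have hset : {w | localComp R v x w} = {w | R x w} := by
    ext w
    simp [localComp, Xor', hxv, xor_def]
  rw [hset]

theorem outDeg_lc_mem [Fintype V] {R : V → V → Prop} {v x : V} (hxv : R x v) :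
    outDeg (localComp R v) x % 2 = (outDeg R x + outDeg R v) % 2 := by
  unfold outDeg
  have hset : {w | localComp R v x w} = {w | Xor' (R x w) (R v w)} := by
    ext w
    simp only [localComp, Xor', hxv, true_and, Set.mem_setOf_eq]
  rw [hset]
  exact card_xor_mod _ _

theorem outDeg_sl_ne {R : V → V → Prop} {u v x : V} (hx : x ≠ v) :
    outDeg (slideRel R u v) x = outDeg R x := by
  unfold outDeg
  have hset : {w | slideRel R u v x w} = {w | R x w} := by
    ext w
    simp [slideRel, Xor', hx, xor_def]
  rw [hset]

theorem outDeg_sl_self [Fintype V] (R : V → V → Prop) (u v : V) :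
    outDeg (slideRel R u v) v % 2 = (outDeg R v + outDeg R u) % 2 := by
  unfold outDeg
  have hset : {w | slideRel R u v v w} = {w | Xor' (R v w) (R u w)} := by
    ext w
    simp only [slideRel, Xor', Set.mem_setOf_eq, true_and]
  rw [hset]
  exact card_xor_mod _ _

end ParityAux

section MainAux

variable {V : Type*}

def OddLvls (R : V → V → Prop) : Set ℕ := {k | ∃ x, lvl R x = k ∧ Odd (outDeg R x)}

theorem oddLvls_congr {R R' : V → V → Prop} (hlvl : ∀ x, lvl R' x = lvl R x)
    (hsame : ∀ x, Odd (outDeg R' x) ↔ Odd (outDeg R x)) : OddLvls R' = OddLvls R :=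
  Set.ext fun k => exists_congr fun x => by rw [hlvl x, hsame x]

theorem gstep_invariant [Fintype V] {R R' : V → V → Prop} (hR : AcyclicRel R)
    (h : GStep R R') :
    AcyclicRel R' ∧ ((∃ x, Odd (outDeg R x)) ↔ ∃ x, Odd (outDeg R' x)) ∧
      sSup (OddLvls R) = sSup (OddLvls R') := by
  have hirr : ∀ x : V, ¬ R x x := fun x hx => hR x (.single hx)
  cases h with
  | lc v =>
    have C1 : ∀ z x, localComp R v z x → lvl R z < lvl R x := by
      intro z x hzx
      rcases hzx with ⟨h1, _⟩ | ⟨⟨h1, h2⟩, _⟩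
      · exact lvl_lt hR h1
      · exact (lvl_lt hR h1).trans (lvl_lt hR h2)
    have C3 : ∀ z x, R z x →
        ∃ z', localComp R v z' x ∧ lvl R z ≤ lvl R z' ∧ lvl R z' < lvl R x := by
      intro z x hzx
      by_cases hz : R z v ∧ R v x
      · exact ⟨v, Or.inl ⟨hz.2, fun hc => hirr v hc.1⟩, (lvl_lt hR hz.1).le, lvl_lt hR hz.2⟩
      · exact ⟨z, Or.inl ⟨hzx, hz⟩, le_rfl, lvl_lt hR hzx⟩
    have hacy : AcyclicRel (localComp R v) := acyclic_of_mono C1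
    have hlvl := lvl_preserved hR C1 C3
    have hdeg_not : ∀ x, ¬ R x v → outDeg (localComp R v) x = outDeg R x :=
      fun x hx => outDeg_lc_not hx
    refine ⟨hacy, ?_⟩
    by_cases hv : Odd (outDeg R v)
    · -- odd pivot
      have hv2 : outDeg R v % 2 = 1 := Nat.odd_iff.mp hv
      have hvodd' : Odd (outDeg (localComp R v) v) := by
        rw [hdeg_not v (hirr v)]; exact hv
      have hbddR : BddAbove (OddLvls R) := by
        refine ⟨Fintype.card V, ?_⟩
        rintro k ⟨x, rfl, -⟩
        exact (lvl_lt_card hR x).le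
      have hbddR' : BddAbove (OddLvls (localComp R v)) := by
        refine ⟨Fintype.card V, ?_⟩
        rintro k ⟨x, rfl, -⟩
        rw [hlvl x]
        exact (lvl_lt_card hR x).le
      have hneR : (OddLvls R).Nonempty := ⟨lvl R v, v, rfl, hv⟩
      have hneR' : (OddLvls (localComp R v)).Nonempty := ⟨lvl (localComp R v) v, v, rfl, hvodd'⟩
      refine ⟨⟨fun _ => ⟨v, hvodd'⟩, fun _ => ⟨v, hv⟩⟩, ?_⟩
      apply le_antisymm
      · apply csSup_le hneR
        rintro k ⟨x, rfl, hx⟩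
        by_cases hxv : R x v
        · have h1 : lvl R x < lvl R v := lvl_lt hR hxv
          have h2 : lvl R v ≤ sSup (OddLvls (localComp R v)) :=
            le_csSup hbddR' ⟨v, hlvl v, hvodd'⟩
          omega
        · exact le_csSup hbddR' ⟨x, hlvl x, by rw [hdeg_not x hxv]; exact hx⟩
      · apply csSup_le hneR'
        rintro k ⟨x, rfl, hx⟩
        rw [hlvl x]
        by_cases hxv : R x v
        · have h1 : lvl R x < lvl R v := lvl_lt hR hxv
          have h2 : lvl R v ≤ sSup (OddLvls R) := le_csSup hbddR ⟨v, rfl, hv⟩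
          omega
        · refine le_csSup hbddR ⟨x, rfl, ?_⟩
          rwa [hdeg_not x hxv] at hx
    · -- even pivot: parities unchanged
      have hv2 : outDeg R v % 2 = 0 := by
        rw [Nat.odd_iff] at hv; omega
      have hsame : ∀ x, Odd (outDeg (localComp R v) x) ↔ Odd (outDeg R x) := by
        intro x
        by_cases hx : R x v
        · have hm := outDeg_lc_mem (R := R) (v := v) hx
          rw [Nat.odd_iff, Nat.odd_iff]
          omega
        · rw [hdeg_not x hx]
      refine ⟨exists_congr fun x => (hsame x).symm, ?_⟩
      rw [oddLvls_congr hlvl hsame]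
  | sl u v hne hN =>
    have hlu : lvl R u = lvl R v := lvl_congr_in hN
    have C1 : ∀ z x, slideRel R u v z x → lvl R z < lvl R x := by
      intro z x hzx
      rcases hzx with ⟨h1, _⟩ | ⟨⟨rfl, h2⟩, _⟩
      · exact lvl_lt hR h1
      · exact hlu ▸ lvl_lt hR h2
    have C3 : ∀ z x, R z x →
        ∃ z', slideRel R u v z' x ∧ lvl R z ≤ lvl R z' ∧ lvl R z' < lvl R x := by
      intro z x hzx
      by_cases hz : z = v ∧ R u x
      · obtain ⟨rfl, hux⟩ := hz
        exact ⟨u, Or.inl ⟨hux, fun hc => hne hc.1⟩, hlu.ge, lvl_lt hR hux⟩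
      · exact ⟨z, Or.inl ⟨hzx, hz⟩, le_rfl, lvl_lt hR hzx⟩
    have hacy : AcyclicRel (slideRel R u v) := acyclic_of_mono C1
    have hlvl := lvl_preserved hR C1 C3
    refine ⟨hacy, ?_⟩
    by_cases hu : Odd (outDeg R u)
    · have hu' : outDeg (slideRel R u v) u = outDeg R u := outDeg_sl_ne hne
      have hset : OddLvls (slideRel R u v) = OddLvls R := by
        ext k
        constructor
        · rintro ⟨x, rfl, hx⟩
          by_cases hxv : x = v
          · subst hxv
            exact ⟨u, by rw [hlvl x, ← hlu], hu⟩
          · exact ⟨x, (hlvl x).symm, by rwa [outDeg_sl_ne hxv] at hx⟩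
        · rintro ⟨x, rfl, hx⟩
          by_cases hxv : x = v
          · subst hxv
            exact ⟨u, by rw [hlvl u, hlu], by rw [hu']; exact hu⟩
          · exact ⟨x, hlvl x, by rwa [outDeg_sl_ne hxv]⟩
      refine ⟨⟨fun _ => ⟨u, by rw [hu']; exact hu⟩, fun _ => ⟨u, hu⟩⟩, by rw [hset]⟩
    · have hu2 : outDeg R u % 2 = 0 := by
        rw [Nat.odd_iff] at hu; omega
      have hsame : ∀ x, Odd (outDeg (slideRel R u v) x) ↔ Odd (outDeg R x) := by
        intro x
        by_cases hx : x = v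
        · subst hx
          have hm := outDeg_sl_self R u x
          rw [Nat.odd_iff, Nat.odd_iff]
          omega
        · rw [outDeg_sl_ne hx]
      refine ⟨exists_congr fun x => (hsame x).symm, ?_⟩
      rw [oddLvls_congr hlvl hsame]

theorem chain_invariant [Fintype V] {R R' : V → V → Prop}
    (h : Relation.ReflTransGen GStep R R') (hR : AcyclicRel R) :
    AcyclicRel R' ∧ ((∃ x, Odd (outDeg R x)) ↔ ∃ x, Odd (outDeg R' x)) ∧
      sSup (OddLvls R) = sSup (OddLvls R') := by
  induction h with
  | refl => exact ⟨hR, Iff.rfl, rfl⟩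
  | tail hab hbc ih =>
    obtain ⟨h1, h2, h3⟩ := ih
    obtain ⟨g1, g2, g3⟩ := gstep_invariant h1 hbc
    exact ⟨g1, h2.trans g2, h3.trans g3⟩

theorem iso_invariant {W : Type*} [Fintype V] [Fintype W] {R' : V → V → Prop}
    {S : W → W → Prop} (e : V ≃ W) (he : ∀ a b, R' a b ↔ S (e a) (e b)) :
    ((∃ x, Odd (outDeg R' x)) ↔ ∃ w, Odd (outDeg S w)) ∧ OddLvls R' = OddLvls S := by
  have hdeg : ∀ x, outDeg R' x = outDeg S (e x) := by
    intro x
    exact Nat.card_congr (Equiv.subtypeEquiv e fun w => he x w)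
  have hwalk : ∀ (k : ℕ) (x : V), WalkEnd R' k x ↔ WalkEnd S k (e x) := by
    intro k x
    constructor
    · rintro ⟨f, rfl, hstep⟩
      exact ⟨fun n => e (f n), rfl, fun i hi => (he _ _).mp (hstep i hi)⟩
    · rintro ⟨f, hfk, hstep⟩
      refine ⟨fun n => e.symm (f n), by show e.symm (f k) = x; rw [hfk, e.symm_apply_apply], fun i hi => ?_⟩
      rw [he]
      simpa using hstep i hi
  have hlvl : ∀ x, lvl R' x = lvl S (e x) := by
    intro x
    unfold lvl
    congr 1
    ext k
    exact hwalk k x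
  constructor
  · constructor
    · rintro ⟨x, hx⟩
      exact ⟨e x, hdeg x ▸ hx⟩
    · rintro ⟨w, hw⟩
      refine ⟨e.symm w, ?_⟩
      rw [hdeg, e.apply_symm_apply]
      exact hw
  · ext k
    constructor
    · rintro ⟨x, rfl, hx⟩
      exact ⟨e x, (hlvl x).symm, hdeg x ▸ hx⟩
    · rintro ⟨w, rfl, hw⟩
      refine ⟨e.symm w, ?_, ?_⟩
      · rw [hlvl, e.apply_symm_apply]
      · rw [hdeg, e.apply_symm_apply]
        exact hw

theorem mem_levelSet_iff [Fintype V] {R : V → V → Prop} (hR : AcyclicRel R) {k : ℕ} {v : V} :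
    v ∈ levelSet R k ↔ lvl R v = k := by
  unfold levelSet
  simp only [Set.mem_setOf_eq]
  rw [endPath_iff_walkEnd hR]
  constructor
  · rintro ⟨h1, h2⟩
    refine le_antisymm ?_ (le_lvl hR h1)
    by_contra hlt
    push_neg at hlt
    exact h2 _ hlt ((endPath_iff_walkEnd hR).mpr (lvl_mem hR v))
  · rintro rfl
    exact ⟨lvl_mem hR v, fun m hm hep =>
      absurd (le_lvl hR ((endPath_iff_walkEnd hR).mp hep)) (by omega)⟩

end MainAux

/-- Bott equivalent acyclic digraphs have the same odd height: one has a
vertex of odd out-degree iff the other does, and in that case the maximal `k`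
such that `L_k` contains a vertex of odd out-degree is the same for both. -/
theorem odd_height_invariant {V W : Type*} [Fintype V] [Fintype W]
    (R : V → V → Prop) (S : W → W → Prop)
    (hR : AcyclicRel R) (hS : AcyclicRel S) (h : BottEquivD R S) :
    ((∃ v : V, Odd (outDeg R v)) ↔ (∃ w : W, Odd (outDeg S w))) ∧
    ((∃ v : V, Odd (outDeg R v)) → (∃ w : W, Odd (outDeg S w)) →
      sSup {k : ℕ | ∃ v ∈ levelSet R k, Odd (outDeg R v)} =
        sSup {k : ℕ | ∃ w ∈ levelSet S k, Odd (outDeg S w)}) := by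
  obtain ⟨R', hchain, e, he⟩ := h
  obtain ⟨hR', hiff1, hsup1⟩ := chain_invariant hchain hR
  obtain ⟨hiff2, hset2⟩ := iso_invariant e he
  have hA : {k : ℕ | ∃ v ∈ levelSet R k, Odd (outDeg R v)} = OddLvls R := by
    ext k
    exact exists_congr fun v => and_congr_left' (mem_levelSet_iff hR)
  have hB : {k : ℕ | ∃ w ∈ levelSet S k, Odd (outDeg S w)} = OddLvls S := by
    ext k
    exact exists_congr fun w => and_congr_left' (mem_levelSet_iff hS)
  refine ⟨hiff1.trans hiff2, fun _ _ => ?_⟩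
  rw [hA, hB, hsup1, hset2]
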